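/- For every n ≥ 3, the number of orbits of words in {0,1}^n under the cyclic shift, given by p_n = (1/n) · Σ_{d|n} φ(d) · 2^{n/d}, is even. -/

import Mathlib

open Finset

/-- Fermat: p ∣ x^p − x over ℤ. -/
lemma fermat_int (p : ℕ) (hp : p.Prime) (x : ℤ) : (p : ℤ) ∣ x ^ p - x := by
  haveI : Fact p.Prime := ⟨hp⟩
  rw [← ZMod.intCast_zmod_eq_zero_iff_dvd]
  push_cast
  rw [ZMod.pow_card, sub_self]

/-- The inner sum in the divisor decomposition. -/
noncomputable def F (p k w : ℕ) : ℤ :=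
  ∑ i ∈ range (k + 1), (Nat.totient (p ^ i) : ℤ) * 2 ^ (p ^ (k - i) * w)

lemma F_succ (p : ℕ) (hp : p.Prime) (k w : ℕ) :
    F p (k + 1) w = p * F p k w + ((2:ℤ) ^ (p ^ (k+1) * w) - 2 ^ (p ^ k * w)) := by
  unfold F
  rw [Finset.sum_range_succ' _ (k+1)]
  have h1 : ∀ i ∈ range (k+1), (Nat.totient (p ^ (i+1)) : ℤ) * 2 ^ (p ^ (k + 1 - (i+1)) * w)
      = (p : ℤ) * ((Nat.totient (p ^ i) : ℤ) * 2 ^ (p ^ (k - i) * w))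
        - (if i = 0 then (2:ℤ) ^ (p ^ k * w) else 0) := by
    intro i hi
    have h2 : k + 1 - (i+1) = k - i := by omega
    rw [h2]
    rcases Nat.eq_zero_or_pos i with rfl | hi0
    · simp only [if_pos rfl, Nat.sub_zero, zero_add, pow_one, Nat.totient_prime hp, Nat.totient_one]
      push_cast [Nat.cast_sub hp.one_le]
      norm_num [Nat.totient_one]
      ring
    · have : Nat.totient (p ^ (i+1)) = p * Nat.totient (p ^ i) := by
        rw [Nat.totient_prime_pow hp (by omega : 0 < i + 1),
            Nat.totient_prime_pow hp hi0]
        have e1 : i + 1 - 1 = i := by omega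
        have e2 : p ^ i = p * p ^ (i - 1) := by
          rw [← pow_succ']
          congr 1
          omega
        rw [e1, e2]
        ring
      simp [this, if_neg (by omega : i ≠ 0)]
      push_cast
      ring
  rw [Finset.sum_congr rfl h1, Finset.sum_sub_distrib, Finset.sum_ite_eq' (range (k+1)) 0]
  simp [Finset.mul_sum]
  ring

lemma key (p : ℕ) (hp : p.Prime) (w k : ℕ) : (p : ℤ) ^ k ∣ F p k w := by
  induction k with
  | zero => simp
  | succ k ih =>
    rw [F_succ p hp k w]
    apply dvd_add
    · rw [pow_succ']
      exact mul_dvd_mul_left _ ih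
    · have hbase : (p : ℤ) ∣ (2:ℤ) ^ (p * w) - 2 ^ w := by
        have := fermat_int p hp ((2:ℤ) ^ w)
        rwa [← pow_mul, mul_comm w p] at this
      have := dvd_sub_pow_of_dvd_sub hbase k
      rw [← pow_mul, ← pow_mul] at this
      rw [show p ^ (k+1) * w = p * w * p ^ k by ring, show p ^ k * w = w * p ^ k by ring]
      exact_mod_cast this

open scoped Pointwise in
lemma sum_divisors_coprime_mul {M : Type*} [AddCommMonoid M] (f : ℕ → M) {m n : ℕ}
    (h : Nat.Coprime m n) (hm : m ≠ 0) (hn : n ≠ 0) :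
    ∑ d ∈ (m * n).divisors, f d = ∑ i ∈ m.divisors, ∑ j ∈ n.divisors, f (i * j) := by
  rw [Nat.divisors_mul, Finset.mul_def, Finset.sum_image, Finset.sum_product]
  rintro ⟨i, j⟩ hij ⟨i', j'⟩ hij' heq
  simp only [Finset.mem_coe, Finset.mem_product, Nat.mem_divisors] at hij hij'
  obtain ⟨⟨hi, -⟩, hj, -⟩ := hij
  obtain ⟨⟨hi', -⟩, hj', -⟩ := hij'
  simp only at heq
  have hii' : i = i' := by
    have c1 : Nat.Coprime i j' := Nat.Coprime.coprime_dvd_left hi (Nat.Coprime.coprime_dvd_right hj' h)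
    have c2 : Nat.Coprime i' j := Nat.Coprime.coprime_dvd_left hi' (Nat.Coprime.coprime_dvd_right hj h)
    have d1 : i ∣ i' * j' := heq ▸ Dvd.intro j rfl
    have d2 : i' ∣ i * j := heq ▸ Dvd.intro j' rfl
    exact Nat.dvd_antisymm (c1.dvd_of_dvd_mul_right d1) (c2.dvd_of_dvd_mul_right d2)
  subst hii'
  have hi0 : i ≠ 0 := fun h0 => hm (by simpa [h0] using hi)
  exact Prod.ext rfl (Nat.eq_of_mul_eq_mul_left (Nat.pos_of_ne_zero hi0) heq)

/-- decomposition of S over divisors of `p^k * m` with `p ∤ m`. -/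
lemma S_decomp (p : ℕ) (hp : p.Prime) (k m : ℕ) (hm : m ≠ 0) (hpm : ¬ p ∣ m) :
    ((∑ d ∈ (p ^ k * m).divisors, Nat.totient d * 2 ^ ((p ^ k * m) / d) : ℕ) : ℤ)
      = ∑ v ∈ m.divisors, (Nat.totient v : ℤ) * F p k (m / v) := by
  have hcop : Nat.Coprime (p ^ k) m := (Nat.Prime.coprime_iff_not_dvd hp).mpr hpm |>.pow_left k
  push_cast
  rw [sum_divisors_coprime_mul _ hcop (pow_ne_zero k hp.ne_zero) hm]
  rw [Nat.divisors_prime_pow hp, Finset.sum_map]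
  rw [Finset.sum_comm]
  apply Finset.sum_congr rfl
  intro v hv
  rw [Nat.mem_divisors] at hv
  obtain ⟨hvm, -⟩ := hv
  unfold F
  rw [Finset.mul_sum]
  apply Finset.sum_congr rfl
  intro i hi
  rw [Finset.mem_range] at hi
  have hik : i ≤ k := by omega
  simp only [Function.Embedding.coeFn_mk]
  have hdiv : (p ^ k * m) / (p ^ i * v) = p ^ (k - i) * (m / v) := by
    have hv0 : v ≠ 0 := fun h0 => hm (by simpa [h0] using hvm)
    rw [Nat.div_eq_of_eq_mul_left (Nat.mul_pos (pow_pos hp.pos i) (Nat.pos_of_ne_zero hv0))]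
    rw [show p ^ (k-i) * (m / v) * (p ^ i * v) = (p ^ i * p ^ (k-i)) * (v * (m / v)) by ring]
    rw [← pow_add, Nat.add_sub_cancel' hik, Nat.mul_div_cancel' hvm]
  rw [hdiv]
  have : Nat.totient (p ^ i * v) = Nat.totient (p ^ i) * Nat.totient v := by
    apply Nat.totient_mul
    exact ((Nat.Prime.coprime_iff_not_dvd hp).mpr hpm).pow_left i |>.coprime_dvd_right hvm
  rw [this]
  push_cast
  ring

lemma n_dvd_S (n : ℕ) (hn : n ≠ 0) :
    n ∣ ∑ d ∈ n.divisors, Nat.totient d * 2 ^ (n / d) := by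
  rw [Nat.dvd_iff_prime_pow_dvd_dvd]
  intro p k pp hpk
  have hp : p.Prime := pp
  set K := n.factorization p with hK
  have hkK : k ≤ K := (hp.pow_dvd_iff_le_factorization hn).mp (hpk.trans (dvd_refl n)) |>.trans_eq rfl
  refine dvd_trans (pow_dvd_pow p hkK) ?_
  set m := n / p ^ K with hm
  have hn' : p ^ K * m = n := Nat.ordProj_mul_ordCompl_eq_self n p
  have hm0 : m ≠ 0 := (Nat.ordCompl_pos p hn).ne'
  have hpm : ¬ p ∣ m := Nat.not_dvd_ordCompl hp hn
  have hcast : ((p : ℤ)) ^ K ∣ ((∑ d ∈ n.divisors, Nat.totient d * 2 ^ (n / d) : ℕ) : ℤ) := by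
    rw [← hn', S_decomp p hp K m hm0 hpm]
    exact Finset.dvd_sum fun v hv => Dvd.dvd.mul_left (key p hp (m / v) K) _
  exact_mod_cast hcast

lemma totient_two_pow (i : ℕ) : Nat.totient (2 ^ i) = 2 ^ (i - 1) := by
  rcases Nat.eq_zero_or_pos i with rfl | hi
  · simp
  · rw [Nat.totient_prime_pow Nat.prime_two hi]
    simp

lemma bound1 (t : ℕ) : t + 2 ≤ 3 * 2 ^ t := by
  have h := Nat.lt_two_pow_self (n := t)
  omega

lemma bound2 (t : ℕ) (ht : 2 ≤ t) : t + 2 ≤ 2 ^ t := by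
  obtain ⟨s, rfl⟩ : ∃ s, t = s + 2 := ⟨t - 2, by omega⟩
  have h := Nat.lt_two_pow_self (n := s)
  have : 2 ^ (s + 2) = 4 * 2 ^ s := by ring
  omega

lemma F_term_eq (a i m : ℕ) :
    (Nat.totient (2 ^ i) : ℤ) * 2 ^ (2 ^ (a - i) * m) = 2 ^ ((i - 1) + 2 ^ (a - i) * m) := by
  rw [totient_two_pow, pow_add]
  push_cast
  ring

lemma F_dvd_of_three_le (a m : ℕ) (hm : 3 ≤ m) : (2 : ℤ) ^ (a + 1) ∣ F 2 a m := by
  apply Finset.dvd_sum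
  intro i hi
  rw [Finset.mem_range] at hi
  rw [F_term_eq]
  apply pow_dvd_pow
  rcases Nat.eq_zero_or_pos i with rfl | hi0
  · have h := Nat.lt_two_pow_self (n := a)
    have h2 : 3 * 2 ^ a ≤ m * 2 ^ a := Nat.mul_le_mul_right _ hm
    have h3 : 2 ^ (a - 0) * m = m * 2 ^ a := by rw [Nat.sub_zero]; ring
    omega
  · have hia : i ≤ a := by omega
    have h := bound1 (a - i)
    have h2 : 3 * 2 ^ (a - i) ≤ m * 2 ^ (a - i) := Nat.mul_le_mul_right _ hm
    have h3 : 2 ^ (a - i) * m = m * 2 ^ (a - i) := by ring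
    omega

lemma F_dvd_of_one (a : ℕ) (ha : 2 ≤ a) : (2 : ℤ) ^ (a + 1) ∣ F 2 a 1 := by
  obtain ⟨b, rfl⟩ : ∃ b, a = b + 2 := ⟨a - 2, by omega⟩
  unfold F
  have e1 : b + 2 - (b + 1) = 1 := by omega
  have e2 : b + 2 - (b + 2) = 0 := by omega
  have e3 : b + 1 - 1 + 2 ^ 1 * 1 = b + 2 := by omega
  have e4 : b + 2 - 1 + 2 ^ 0 * 1 = b + 2 := by omega
  rw [Finset.sum_range_succ, Finset.sum_range_succ, F_term_eq, F_term_eq, e1, e2, e3, e4]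
  have hsum : (2:ℤ) ^ (b + 2 + 1) ∣ ∑ x ∈ range (b + 1), (Nat.totient (2 ^ x) : ℤ) * 2 ^ (2 ^ (b + 2 - x) * 1) := by
    apply Finset.dvd_sum
    intro i hi
    rw [Finset.mem_range] at hi
    rw [F_term_eq]
    apply pow_dvd_pow
    rcases Nat.eq_zero_or_pos i with rfl | hi0
    · have h := bound2 (b + 2) (by omega)
      rw [Nat.sub_zero]
      omega
    · have h := bound2 (b + 2 - i) (by omega)
      omega
  obtain ⟨c, hc⟩ := hsum
  refine ⟨c + 1, ?_⟩
  rw [hc, pow_succ]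
  ring

lemma two_part (a m : ℕ) (hm2 : ¬ 2 ∣ m) (hm0 : m ≠ 0) (h3 : 3 ≤ 2 ^ a * m) :
    (2:ℤ) ^ (a + 1) ∣ ((∑ d ∈ (2 ^ a * m).divisors, Nat.totient d * 2 ^ ((2 ^ a * m) / d) : ℕ) : ℤ) := by
  rw [S_decomp 2 Nat.prime_two a m hm0 hm2]
  have h1 : 1 ∈ m.divisors := Nat.one_mem_divisors.mpr hm0
  rw [← Finset.sum_erase_add _ _ h1]
  apply dvd_add
  · apply Finset.dvd_sum
    intro v hv
    rw [Finset.mem_erase, Nat.mem_divisors] at hv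
    obtain ⟨hv1, hvm, -⟩ := hv
    have hv2 : ¬ 2 ∣ v := fun h => hm2 (h.trans hvm)
    have hv0 : v ≠ 0 := fun h => hv2 (by simp [h])
    have h3v : 2 < v := by omega
    have hphi : 2 ∣ Nat.totient v := (Nat.totient_even h3v).two_dvd
    rw [pow_succ']
    exact mul_dvd_mul (by exact_mod_cast hphi) (key 2 Nat.prime_two (m / v) a)
  · simp only [Nat.totient_one, Nat.cast_one, one_mul, Nat.div_one]
    rcases eq_or_ne m 1 with rfl | hm1
    · have ha2 : 2 ≤ a := by
        by_contra h
        have : 2 ^ a ≤ 2 ^ 1 := Nat.pow_le_pow_right (by omega) (by omega)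
        simp at h3 ⊢
        omega
      exact F_dvd_of_one a ha2
    · have : 3 ≤ m := by omega
      exact F_dvd_of_three_le a m this

/-- For every `n ≥ 3`, the number of necklaces
`p_n = (1/n) ∑_{d ∣ n} φ(d) 2^{n/d}` of binary words of length `n` is even. -/
theorem stmt0 (n : ℕ) (hn : 3 ≤ n) :
    2 ∣ (∑ d ∈ n.divisors, Nat.totient d * 2 ^ (n / d)) / n := by
  have hn0 : n ≠ 0 := by omega
  have hdvd : n ∣ ∑ d ∈ n.divisors, Nat.totient d * 2 ^ (n / d) := n_dvd_S n hn0
  have h2n : 2 * n ∣ ∑ d ∈ n.divisors, Nat.totient d * 2 ^ (n / d) := by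
    have hnm : 2 ^ (n.factorization 2) * (n / 2 ^ (n.factorization 2)) = n :=
      Nat.ordProj_mul_ordCompl_eq_self n 2
    set a := n.factorization 2 with haa
    set m := n / 2 ^ a with hmm
    have hm2 : ¬ 2 ∣ m := Nat.not_dvd_ordCompl Nat.prime_two hn0
    have hm0 : m ≠ 0 := by
      intro h
      rw [h, mul_zero] at hnm
      omega
    rcases Nat.eq_zero_or_pos a with ha0 | ha1
    · have hnodd : ¬ 2 ∣ n := by
        rw [← hnm, ha0, pow_zero, one_mul]
        exact hm2
      have h2S : 2 ∣ ∑ d ∈ n.divisors, Nat.totient d * 2 ^ (n / d) := by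
        apply Finset.dvd_sum
        intro d hd
        rw [Nat.mem_divisors] at hd
        have hd1 : 1 ≤ n / d := Nat.one_le_div_iff (Nat.pos_of_ne_zero
          (fun h => hn0 (by simpa [h] using hd.1))) |>.mpr (Nat.le_of_dvd (by omega) hd.1)
        exact Dvd.dvd.mul_left (dvd_pow_self 2 (by omega)) _
      exact Nat.Coprime.mul_dvd_of_dvd_of_dvd
        ((Nat.prime_two.coprime_iff_not_dvd).mpr hnodd) h2S hdvd
    · have h2a : (2:ℤ) ^ (a + 1) ∣
          ((∑ d ∈ n.divisors, Nat.totient d * 2 ^ (n / d) : ℕ) : ℤ) := by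
        conv_lhs => skip
        rw [show n = 2 ^ a * m from hnm.symm] -- rewrite n everywhere
        exact two_part a m hm2 hm0 (hnm ▸ hn)
      have h2a' : 2 ^ (a + 1) ∣ ∑ d ∈ n.divisors, Nat.totient d * 2 ^ (n / d) := by
        exact_mod_cast h2a
      have hmS : m ∣ ∑ d ∈ n.divisors, Nat.totient d * 2 ^ (n / d) :=
        dvd_trans ⟨2 ^ a, by rw [← hnm]; ring⟩ hdvd
      have h2nn : 2 * n = 2 ^ (a + 1) * m := by
        rw [← hnm, pow_succ]
        ring
      rw [h2nn]
      exact Nat.Coprime.mul_dvd_of_dvd_of_dvd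
        (((Nat.prime_two.coprime_iff_not_dvd).mpr hm2).pow_left _) h2a' hmS
  obtain ⟨t, ht⟩ := h2n
  rw [ht, show 2 * n * t = n * (2 * t) by ring, Nat.mul_div_cancel_left _ (by omega)]
  exact ⟨t, rfl⟩
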